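/- Let m ∈ ℤ and n ∈ ℕ with m and n relatively prime. Let (p_i) be a sequence of primes, (ω_i) a sequence in (0,∞), and for each i let s_i ∈ ℚ_{p_i} (an element of the p_i-adic field). Then the following are equivalent: (1) for every polynomial P ∈ ℤ[X], the sequence ‖P(s_i)‖_{p_i}^{ω_i} converges to 0 if P(m/n) = 0 (evaluation in ℚ) and to 1 otherwise; (2) for every positive integer k, ‖k‖_{p_i}^{ω_i} → 1, and ‖s_i − m/n‖_{p_i}^{ω_i} → 0 (where m/n is regarded as an element of ℚ_{p_i} via the canonical embedding ℚ ⊆ ℚ_{p_i}). -/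

import Mathlib

open Filter Polynomial

section Aux

variable (p : ℕ → ℕ) [∀ i, Fact (p i).Prime] (ω : ℕ → ℝ)

/-- The seminorm sequence tends to zero. -/
def TTz (f : ∀ i, ℚ_[p i]) : Prop :=
  Filter.Tendsto (fun i => ‖f i‖ ^ ω i) Filter.atTop (nhds 0)

/-- The seminorm sequence is eventually bounded. -/
def BBd (f : ∀ i, ℚ_[p i]) : Prop :=
  ∃ C : ℝ, ∀ᶠ i in Filter.atTop, ‖f i‖ ^ ω i ≤ C

variable {p ω}

lemma rpow_max' (a b : ℝ) (ha : 0 ≤ a) (hb : 0 ≤ b) {w : ℝ} (hw : 0 < w) :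
    max a b ^ w = max (a ^ w) (b ^ w) := by
  rcases le_total a b with h | h
  · rw [max_eq_right h, max_eq_right (Real.rpow_le_rpow ha h hw.le)]
  · rw [max_eq_left h, max_eq_left (Real.rpow_le_rpow hb h hw.le)]

lemma rpow_add_le (hω : ∀ i, 0 < ω i) (f g : ∀ i, ℚ_[p i]) (i : ℕ) :
    ‖f i + g i‖ ^ ω i ≤ max (‖f i‖ ^ ω i) (‖g i‖ ^ ω i) := by
  calc ‖f i + g i‖ ^ ω i ≤ (max ‖f i‖ ‖g i‖) ^ ω i :=
        Real.rpow_le_rpow (norm_nonneg _) (Padic.nonarchimedean _ _) (hω i).le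
    _ = max (‖f i‖ ^ ω i) (‖g i‖ ^ ω i) :=
        rpow_max' _ _ (norm_nonneg _) (norm_nonneg _) (hω i)

lemma TTz_congr {f g : ∀ i, ℚ_[p i]} (h : ∀ i, f i = g i) (hf : TTz p ω f) : TTz p ω g := by
  have : f = g := funext h
  rwa [this] at hf

lemma TTz_add (hω : ∀ i, 0 < ω i) {f g : ∀ i, ℚ_[p i]} (hf : TTz p ω f) (hg : TTz p ω g) :
    TTz p ω (fun i => f i + g i) := by
  apply squeeze_zero (fun i => Real.rpow_nonneg (norm_nonneg _) _)
    (fun i => (rpow_add_le hω f g i).trans (max_le_add_of_nonneg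
      (Real.rpow_nonneg (norm_nonneg _) _) (Real.rpow_nonneg (norm_nonneg _) _)))
  simpa using hf.add hg

lemma BBd_add {f g : ∀ i, ℚ_[p i]} (hω : ∀ i, 0 < ω i) (hf : BBd p ω f) (hg : BBd p ω g) :
    BBd p ω (fun i => f i + g i) := by
  obtain ⟨C, hC⟩ := hf
  obtain ⟨D, hD⟩ := hg
  refine ⟨max C D, ?_⟩
  filter_upwards [hC, hD] with i hC hD
  exact (rpow_add_le hω f g i).trans (max_le_max hC hD)

lemma BBd_of_TTz {f : ∀ i, ℚ_[p i]} (hf : TTz p ω f) : BBd p ω f :=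
  ⟨1, (hf.eventually (gt_mem_nhds one_pos)).mono fun _ h => h.le⟩

lemma TTz_mul (hω : ∀ i, 0 < ω i) {f g : ∀ i, ℚ_[p i]} (hg : BBd p ω g) (hf : TTz p ω f) :
    TTz p ω (fun i => g i * f i) := by
  obtain ⟨C, hC⟩ := hg
  apply squeeze_zero' (Eventually.of_forall fun i => Real.rpow_nonneg (norm_nonneg _) _)
    (g := fun i => max C 0 * (‖f i‖ ^ ω i))
  · filter_upwards [hC] with i hCi
    rw [norm_mul, Real.mul_rpow (norm_nonneg _) (norm_nonneg _)]
    exact mul_le_mul_of_nonneg_right (hCi.trans (le_max_left _ _))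
      (Real.rpow_nonneg (norm_nonneg _) _)
  · simpa using (tendsto_const_nhds (x := max C 0)).mul hf

lemma tendsto_one_int (hω : ∀ i, 0 < ω i)
    (hk : ∀ k : ℕ, 0 < k → Tendsto (fun i => ‖((k : ℚ_[p i]))‖ ^ ω i) atTop (nhds 1))
    (z : ℤ) (hz : z ≠ 0) :
    Tendsto (fun i => ‖((z : ℚ_[p i]))‖ ^ ω i) atTop (nhds 1) := by
  have h := hk z.natAbs (Int.natAbs_pos.mpr hz)
  have : ∀ i : ℕ, ‖((z.natAbs : ℚ_[p i]))‖ = ‖((z : ℚ_[p i]))‖ := by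
    intro i
    rcases Int.natAbs_eq z with hz' | hz'
    · conv_rhs => rw [hz']
      rw [Int.cast_natCast]
    · conv_rhs => rw [hz']
      rw [Int.cast_neg, norm_neg, Int.cast_natCast]
  simpa only [this] using h

lemma tendsto_one_rat (hω : ∀ i, 0 < ω i)
    (hk : ∀ k : ℕ, 0 < k → Tendsto (fun i => ‖((k : ℚ_[p i]))‖ ^ ω i) atTop (nhds 1))
    (r : ℚ) (hr : r ≠ 0) :
    Tendsto (fun i => ‖((r : ℚ_[p i]))‖ ^ ω i) atTop (nhds 1) := by
  have hnum := tendsto_one_int hω hk r.num (Rat.num_ne_zero.mpr hr)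
  have hden := hk r.den r.pos
  have key : ∀ i : ℕ, ‖((r : ℚ_[p i]))‖ ^ ω i
      = (‖((r.num : ℚ_[p i]))‖ ^ ω i) / (‖((r.den : ℚ_[p i]))‖ ^ ω i) := by
    intro i
    rw [Rat.cast_def, norm_div, Real.div_rpow (norm_nonneg _) (norm_nonneg _)]
  have h2 := hnum.div hden one_ne_zero
  rw [div_one] at h2
  apply h2.congr
  intro i
  exact (key i).symm

lemma BBd_rat (hω : ∀ i, 0 < ω i)
    (hk : ∀ k : ℕ, 0 < k → Tendsto (fun i => ‖((k : ℚ_[p i]))‖ ^ ω i) atTop (nhds 1))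
    (r : ℚ) : BBd p ω (fun i => ((r : ℚ_[p i]))) := by
  rcases eq_or_ne r 0 with rfl | hr
  · refine ⟨1, Eventually.of_forall fun i => ?_⟩
    simp [Real.zero_rpow (hω i).ne']
  · exact ⟨2, ((tendsto_one_rat hω hk r hr).eventually
      (gt_mem_nhds (by norm_num : (1:ℝ) < 2))).mono fun i h => h.le⟩

lemma TTz_diff (hω : ∀ i, 0 < ω i)
    (hk : ∀ k : ℕ, 0 < k → Tendsto (fun i => ‖((k : ℚ_[p i]))‖ ^ ω i) atTop (nhds 1))
    (s : ∀ i, ℚ_[p i]) (q : ℚ)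
    (hs : TTz p ω (fun i => s i - ((q : ℚ_[p i])))) (P : Polynomial ℤ) :
    TTz p ω (fun i => (Polynomial.aeval (s i) P : ℚ_[p i])
      - (((Polynomial.aeval q P : ℚ) : ℚ_[p i]))) := by
  have hBs : BBd p ω s := by
    have := BBd_add hω (BBd_of_TTz hs) (BBd_rat hω hk q)
    exact ⟨this.choose, by simpa using this.choose_spec⟩
  induction P using Polynomial.induction_on with
  | C a =>
      apply TTz_congr (f := fun _ => 0)
      · intro i; simp
      · unfold TTz
        have : ∀ i : ℕ, ‖(0 : ℚ_[p i])‖ ^ ω i = 0 := by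
          intro i; simp [Real.zero_rpow (hω i).ne']
        simpa only [this] using tendsto_const_nhds
  | add P Q hP hQ =>
      apply TTz_congr
        (f := fun i => ((Polynomial.aeval (s i) P : ℚ_[p i])
            - (((Polynomial.aeval q P : ℚ) : ℚ_[p i])))
          + ((Polynomial.aeval (s i) Q : ℚ_[p i])
            - (((Polynomial.aeval q Q : ℚ) : ℚ_[p i]))))
      · intro i; push_cast [map_add]; ring
      · exact TTz_add hω hP hQ
  | monomial k a hIH =>
      apply TTz_congr
        (f := fun i => s i * ((Polynomial.aeval (s i) (Polynomial.C a * Polynomial.X ^ k) : ℚ_[p i])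
            - (((Polynomial.aeval q (Polynomial.C a * Polynomial.X ^ k) : ℚ) : ℚ_[p i])))
          + ((a * q ^ k : ℚ) : ℚ_[p i]) * (s i - ((q : ℚ_[p i]))))
      · intro i
        simp only [map_mul, map_pow, aeval_C, aeval_X, algebraMap_int_eq, eq_intCast, map_intCast]
        push_cast
        ring
      · exact TTz_add hω (TTz_mul hω hBs hIH) (TTz_mul hω (BBd_rat hω hk _) hs)

lemma norm_eq_of_close {pp : ℕ} [Fact pp.Prime] {x v : ℚ_[pp]} (h : ‖x - v‖ < ‖v‖) :
    ‖x‖ = ‖v‖ := by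
  have : x = (x - v) + v := by ring
  rw [this, Padic.add_eq_max_of_ne (ne_of_lt h), max_eq_right h.le]

end Aux

/-- Let `m ∈ ℤ` and `n ∈ ℕ` be relatively prime, `(p_i)` a sequence of primes, `(ω_i)` a
sequence in `(0,∞)`, and `s_i ∈ ℚ_{p_i}`. The images of the `s_i` under `ℚ_{p_i}^{ω_i}`
converge in `𝔸¹_ℤ` to the image of `m/n ∈ ℚ` (trivial valuation) iff `‖k‖_{p_i}^{ω_i} → 1`
for every positive integer `k` and `‖s_i − m/n‖_{p_i}^{ω_i} → 0`. -/
theorem tendsto_padics_to_rational_iff (m : ℤ) (n : ℕ) (hn : 0 < n)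
    (hmn : IsCoprime m (n : ℤ)) (p : ℕ → ℕ) [∀ i, Fact (p i).Prime]
    (ω : ℕ → ℝ) (hω : ∀ i, 0 < ω i) (s : ∀ i, ℚ_[p i]) :
    (∀ P : Polynomial ℤ,
        Filter.Tendsto (fun i => ‖(Polynomial.aeval (s i) P : ℚ_[p i])‖ ^ ω i)
          Filter.atTop
          (nhds (if (Polynomial.aeval ((m : ℚ) / (n : ℚ)) P : ℚ) = 0 then (0 : ℝ) else 1))) ↔
      ((∀ k : ℕ, 0 < k →
          Filter.Tendsto (fun i => ‖((k : ℚ_[p i]))‖ ^ ω i) Filter.atTop (nhds 1)) ∧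
        Filter.Tendsto
          (fun i => ‖s i - (((m : ℚ) / (n : ℚ) : ℚ) : ℚ_[p i])‖ ^ ω i)
          Filter.atTop (nhds 0)) := by
  have hn0 : ((n : ℚ)) ≠ 0 := Nat.cast_ne_zero.mpr hn.ne'
  set q : ℚ := (m : ℚ) / (n : ℚ) with hq
  constructor
  · intro h
    have hk : ∀ k : ℕ, 0 < k →
        Filter.Tendsto (fun i => ‖((k : ℚ_[p i]))‖ ^ ω i) Filter.atTop (nhds 1) := by
      intro k hkpos
      have hP := h (Polynomial.C (k : ℤ))
      rw [if_neg (by simp [Nat.cast_ne_zero.mpr hkpos.ne'] : ¬ _)] at hP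
      have : ∀ i : ℕ, (Polynomial.aeval (s i) (Polynomial.C (k : ℤ)) : ℚ_[p i])
          = ((k : ℚ_[p i])) := by intro i; simp
      simpa only [this] using hP
    refine ⟨hk, ?_⟩
    -- use P = C n * X - C m
    have hP := h (Polynomial.C (n : ℤ) * Polynomial.X - Polynomial.C m)
    have heval : (Polynomial.aeval q (Polynomial.C (n : ℤ) * Polynomial.X - Polynomial.C m) : ℚ)
        = 0 := by
      simp only [map_sub, map_mul, aeval_C, aeval_X, algebraMap_int_eq, eq_intCast, map_intCast]
      rw [hq]
      push_cast
      field_simp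
      ring
    rw [if_pos heval] at hP
    have hPn : ∀ i : ℕ, (Polynomial.aeval (s i)
        (Polynomial.C (n : ℤ) * Polynomial.X - Polynomial.C m) : ℚ_[p i])
        = ((n : ℚ_[p i])) * (s i - ((q : ℚ_[p i]))) := by
      intro i
      have hn' : ((n : ℚ_[p i])) ≠ 0 := Nat.cast_ne_zero.mpr hn.ne'
      simp only [map_sub, map_mul, aeval_C, aeval_X, algebraMap_int_eq, eq_intCast, map_intCast]
      have : ((n : ℚ_[p i])) * ((q : ℚ_[p i])) = ((m : ℚ_[p i])) := by
        rw [hq]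
        push_cast
        rw [mul_comm, div_mul_eq_mul_div, mul_div_assoc, div_self hn', mul_one]
      rw [mul_sub, this]
      push_cast
      ring
    have hnn := hk n hn
    have key : ∀ i : ℕ, ‖s i - ((q : ℚ_[p i]))‖ ^ ω i
        = (‖(Polynomial.aeval (s i)
            (Polynomial.C (n : ℤ) * Polynomial.X - Polynomial.C m) : ℚ_[p i])‖ ^ ω i)
          / (‖((n : ℚ_[p i]))‖ ^ ω i) := by
      intro i
      rw [hPn i, norm_mul, Real.mul_rpow (norm_nonneg _) (norm_nonneg _)]
      have hne : ‖((n : ℚ_[p i]))‖ ^ ω i ≠ 0 := by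
        apply ne_of_gt
        apply Real.rpow_pos_of_pos
        simpa using (Nat.cast_ne_zero (R := ℚ_[p i])).mpr hn.ne'
      field_simp
    have hfin := hP.div hnn one_ne_zero
    rw [zero_div] at hfin
    apply hfin.congr
    intro i
    exact (key i).symm
  · rintro ⟨hk, hs⟩
    intro P
    have hsT : TTz p ω (fun i => s i - ((q : ℚ_[p i]))) := hs
    have hd := TTz_diff hω hk s q hsT P
    by_cases hv : (Polynomial.aeval q P : ℚ) = 0
    · rw [if_pos hv]
      have : ∀ i : ℕ, (Polynomial.aeval (s i) P : ℚ_[p i])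
          - (((Polynomial.aeval q P : ℚ) : ℚ_[p i])) = (Polynomial.aeval (s i) P : ℚ_[p i]) := by
        intro i; rw [hv]; simp
      unfold TTz at hd
      simpa only [this] using hd
    · rw [if_neg hv]
      have ha := tendsto_one_rat hω hk _ hv
      have hsmall := hd.eventually (gt_mem_nhds (by norm_num : (0:ℝ) < 1/2))
      have hbig := ha.eventually (lt_mem_nhds (by norm_num : (1:ℝ)/2 < 1))
      apply ha.congr'
      filter_upwards [hsmall, hbig] with i h1 h2
      have hlt : ‖(Polynomial.aeval (s i) P : ℚ_[p i])
          - (((Polynomial.aeval q P : ℚ) : ℚ_[p i]))‖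
          < ‖(((Polynomial.aeval q P : ℚ) : ℚ_[p i]))‖ := by
        by_contra hcon
        push_neg at hcon
        have := Real.rpow_le_rpow (norm_nonneg _) hcon (hω i).le
        linarith [h1, h2, this]
      rw [norm_eq_of_close hlt]
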